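/- In a pointed finitely complete category, with notation as for the object R □₀ S (the limit of triples (x,a,y) with (k(x),a) ∈ S and (a,l(y)) ∈ R) and θ : R □₀ S → X × Y the canonical comparison, the kernel of θ is isomorphic to the pullback X ×_A Y of k : X → A and l : Y → A. -/

import Mathlib

open CategoryTheory CategoryTheory.Limits

universe v u

noncomputable section

variable {C : Type u} [Category.{v} C]

/-- A pair of morphisms with common codomain is jointly strongly epimorphic:
it has the lifting property against all monomorphisms. -/
def JointlyStrongEpi {X Y Z : C} (f : X ⟶ Z) (g : Y ⟶ Z) : Prop :=
  ∀ {U V : C} (m : U ⟶ V) (_ : Mono m) (h : Z ⟶ V) (u : X ⟶ U) (v : Y ⟶ U),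
    u ≫ m = f ≫ h → v ≫ m = g ≫ h → ∃ t : Z ⟶ U, t ≫ m = h

variable (C) in
/-- A unital category: pointed, finitely complete, and the product inclusions
`⟨1,0⟩ : X → X × Y` and `⟨0,1⟩ : Y → X × Y` are jointly strongly epimorphic. -/
class Unital [HasZeroObject C] [HasZeroMorphisms C] [HasFiniteLimits C] : Prop where
  jse : ∀ X Y : C, JointlyStrongEpi (prod.lift (𝟙 X) (0 : X ⟶ Y)) (prod.lift (0 : Y ⟶ X) (𝟙 Y))

/-- `f : X ⟶ A` and `g : Y ⟶ A` Huq-commute: there is a cooperator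
`φ : X × Y ⟶ A` with `φ∘⟨1,0⟩ = f` and `φ∘⟨0,1⟩ = g`. -/
def HuqCommute [HasZeroMorphisms C] [HasFiniteLimits C] {X Y A : C} (f : X ⟶ A) (g : Y ⟶ A) : Prop :=
  ∃ φ : X ⨯ Y ⟶ A, prod.lift (𝟙 X) 0 ≫ φ = f ∧ prod.lift 0 (𝟙 Y) ≫ φ = g

variable [HasZeroMorphisms C] [HasFiniteLimits C]

/-- `(r₁, r₂) : R ⇉ A` is an internal equivalence relation. -/
structure IsEquivRelation {R A : C} (r₁ r₂ : R ⟶ A) : Prop where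
  mono : Mono (prod.lift r₁ r₂)
  refl : ∃ e : A ⟶ R, e ≫ r₁ = 𝟙 A ∧ e ≫ r₂ = 𝟙 A
  symm : ∃ σ : R ⟶ R, σ ≫ r₁ = r₂ ∧ σ ≫ r₂ = r₁
  trans : ∃ τ : pullback r₂ r₁ ⟶ R,
    τ ≫ r₁ = pullback.fst r₂ r₁ ≫ r₁ ∧ τ ≫ r₂ = pullback.snd r₂ r₁ ≫ r₂

/-- A monomorphism `k : X ⟶ A` is Bourn-normal if it is the zero class of some internal
equivalence relation on `A`, i.e. `k` is the pullback of the relation's pairing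
`⟨r₁,r₂⟩ : R → A × A` along `⟨1,0⟩ : A → A × A`. -/
def BournNormal {X A : C} (k : X ⟶ A) : Prop :=
  Mono k ∧ ∃ (R : C) (r₁ r₂ : R ⟶ A) (_ : IsEquivRelation r₁ r₂) (κ : X ⟶ R),
    IsPullback κ k (prod.lift r₁ r₂) (prod.lift (𝟙 A) 0)

/-- With notation as above, the kernel of the comparison `θ : R □₀ S → X × Y` is
isomorphic to the pullback `X ×_A Y` of `k` and `l`. -/
theorem stmt19 [HasZeroObject C]
    {R S A X Y : C} (r₁ r₂ : R ⟶ A) (s₁ s₂ : S ⟶ A)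
    (hR : IsEquivRelation r₁ r₂) (hS : IsEquivRelation s₁ s₂)
    (k : X ⟶ A) (κ : X ⟶ R)
    (hk : IsPullback κ k (prod.lift r₁ r₂) (prod.lift (𝟙 A) 0))
    (l : Y ⟶ A) (lam : Y ⟶ S)
    (hl : IsPullback lam l (prod.lift s₁ s₂) (prod.lift 0 (𝟙 A))) :
    Nonempty (kernel (pullback.snd
      (prod.lift (pullback.fst s₂ r₁ ≫ s₁) (pullback.snd s₂ r₁ ≫ r₂)) (prod.map k l))
      ≅ pullback k l) := by
  have hκ₁ : κ ≫ r₁ = k := by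
    have := hk.w =≫ prod.fst; simpa [prod.lift_fst] using this
  have hκ₂ : κ ≫ r₂ = 0 := by
    have := hk.w =≫ prod.snd; simpa [prod.lift_snd] using this
  have hlam1 : lam ≫ s₁ = 0 := by
    have := hl.w =≫ prod.fst; simpa [prod.lift_fst] using this
  have hlam2 : lam ≫ s₂ = l := by
    have := hl.w =≫ prod.snd; simpa [prod.lift_snd] using this
  have monok : Mono k := by
    constructor
    intro T u v h
    have hκ : u ≫ κ = v ≫ κ := by
      have := hR.mono
      rw [← cancel_mono (prod.lift r₁ r₂)]
      simp only [Category.assoc, hk.w, reassoc_of% h]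
    exact hk.hom_ext hκ h
  have monol : Mono l := by
    constructor
    intro T u v h
    have hlam : u ≫ lam = v ≫ lam := by
      have := hS.mono
      rw [← cancel_mono (prod.lift s₁ s₂)]
      simp only [Category.assoc, hl.w, reassoc_of% h]
    exact hl.hom_ext hlam h
  set Φ := prod.lift (pullback.fst s₂ r₁ ≫ s₁) (pullback.snd s₂ r₁ ≫ r₂) with hΦ
  have hι : kernel.ι (pullback.snd Φ (prod.map k l)) ≫ pullback.snd Φ (prod.map k l) = 0 :=
    kernel.condition _
  have hP : pullback.fst s₂ r₁ ≫ s₂ = pullback.snd s₂ r₁ ≫ r₁ := pullback.condition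
  have hW : pullback.fst Φ (prod.map k l) ≫ Φ
      = pullback.snd Φ (prod.map k l) ≫ prod.map k l := pullback.condition
  have hW₁ : pullback.fst Φ (prod.map k l) ≫ pullback.fst s₂ r₁ ≫ s₁
      = pullback.snd Φ (prod.map k l) ≫ prod.fst ≫ k := by
    have := hW =≫ prod.fst; simpa [hΦ, prod.lift_fst] using this
  have hW₂ : pullback.fst Φ (prod.map k l) ≫ pullback.snd s₂ r₁ ≫ r₂
      = pullback.snd Φ (prod.map k l) ≫ prod.snd ≫ l := by
    have := hW =≫ prod.snd; simpa [hΦ, prod.lift_snd] using this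
  -- shorthand for ι ≫ ψ
  set u : kernel (pullback.snd Φ (prod.map k l)) ⟶ pullback s₂ r₁ :=
    kernel.ι (pullback.snd Φ (prod.map k l)) ≫ pullback.fst Φ (prod.map k l) with hu
  have hr₂0 : (u ≫ pullback.snd s₂ r₁) ≫ r₂ = 0 := by
    rw [hu]; simp only [Category.assoc]
    rw [hW₂, reassoc_of% hι, zero_comp]
  have hs₁0 : (u ≫ pullback.fst s₂ r₁) ≫ s₁ = 0 := by
    rw [hu]; simp only [Category.assoc]
    rw [hW₁, reassoc_of% hι, zero_comp]
  have hxw : (u ≫ pullback.snd s₂ r₁) ≫ prod.lift r₁ r₂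
      = ((u ≫ pullback.snd s₂ r₁) ≫ r₁) ≫ prod.lift (𝟙 A) 0 := by
    apply Limits.prod.hom_ext
    · simp [prod.lift_fst]
    · simp only [Category.assoc, prod.lift_snd, comp_zero]
      simpa using hr₂0
  have hyw : (u ≫ pullback.fst s₂ r₁) ≫ prod.lift s₁ s₂
      = ((u ≫ pullback.fst s₂ r₁) ≫ s₂) ≫ prod.lift 0 (𝟙 A) := by
    apply Limits.prod.hom_ext
    · simp only [Category.assoc, prod.lift_fst, comp_zero]
      simpa using hs₁0
    · simp [prod.lift_snd]
  obtain ⟨fx, hfxκ, hfxk⟩ : ∃ fx, fx ≫ κ = u ≫ pullback.snd s₂ r₁ ∧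
      fx ≫ k = (u ≫ pullback.snd s₂ r₁) ≫ r₁ :=
    ⟨hk.lift _ _ hxw, hk.lift_fst _ _ _, hk.lift_snd _ _ _⟩
  obtain ⟨fy, hfylam, hfyl⟩ : ∃ fy, fy ≫ lam = u ≫ pullback.fst s₂ r₁ ∧
      fy ≫ l = (u ≫ pullback.fst s₂ r₁) ≫ s₂ :=
    ⟨hl.lift _ _ hyw, hl.lift_fst _ _ _, hl.lift_snd _ _ _⟩
  have hfcomm : fx ≫ k = fy ≫ l := by
    rw [hfxk, hfyl, hu]
    simp only [Category.assoc]
    rw [hP]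
  have hm : (pullback.snd k l ≫ lam) ≫ s₂ = (pullback.fst k l ≫ κ) ≫ r₁ := by
    rw [Category.assoc, hlam2, Category.assoc, hκ₁, pullback.condition]
  have hw0 : pullback.lift (pullback.snd k l ≫ lam) (pullback.fst k l ≫ κ) hm ≫ Φ
      = 0 ≫ prod.map k l := by
    rw [hΦ]
    apply Limits.prod.hom_ext
    · simp only [Category.assoc, prod.lift_fst, zero_comp]
      rw [pullback.lift_fst_assoc, Category.assoc, hlam1, comp_zero]
    · simp only [Category.assoc, prod.lift_snd, zero_comp]
      rw [pullback.lift_snd_assoc, Category.assoc, hκ₂, comp_zero]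
  have hwθ : pullback.lift (pullback.lift (pullback.snd k l ≫ lam) (pullback.fst k l ≫ κ) hm)
      0 hw0 ≫ pullback.snd Φ (prod.map k l) = 0 := pullback.lift_snd _ _ _
  refine ⟨⟨pullback.lift fx fy hfcomm,
    kernel.lift _ (pullback.lift (pullback.lift (pullback.snd k l ≫ lam)
      (pullback.fst k l ≫ κ) hm) 0 hw0) hwθ, ?_, ?_⟩⟩
  · rw [← cancel_mono (kernel.ι (pullback.snd Φ (prod.map k l)))]
    simp only [Category.assoc, kernel.lift_ι, Category.id_comp]
    apply pullback.hom_ext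
    · apply pullback.hom_ext
      · simp only [Category.assoc, pullback.lift_fst, pullback.lift_fst_assoc,
          pullback.lift_snd_assoc, hfylam, hu]
      · simp only [Category.assoc, pullback.lift_fst, pullback.lift_snd,
          pullback.lift_fst_assoc, pullback.lift_snd_assoc, hfxκ, hu]
    · simp only [Category.assoc, pullback.lift_snd, comp_zero, kernel.condition]
  · apply pullback.hom_ext
    · rw [← cancel_mono k]
      simp only [Category.assoc, Category.id_comp, pullback.lift_fst_assoc, hfxk, hu,
        kernel.lift_ι_assoc, pullback.lift_snd_assoc, hκ₁]
    · rw [← cancel_mono l]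
      simp only [Category.assoc, Category.id_comp, pullback.lift_snd_assoc, hfyl, hu,
        kernel.lift_ι_assoc, pullback.lift_fst_assoc, hlam2]
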